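/- arXiv:1301.1873 — 3 statements merged into one kernel-verified Lean document; each statement's English description precedes it below -/
import Mathlib

section
/- For every integer f ≥ 2, every pattern with at most k variables and length at least f·2^(k-1) contains, as a factor, a balanced pattern p' with some number k' ≥ 1 of variables and length at least f·2^(k'-1). -/
/-- A pattern (non-empty word over variables) is doubled if every variable
occurring in it occurs at least twice. -/
def Doubled {V : Type*} [DecidableEq V] (p : List V) : Prop :=
  ∀ x ∈ p, 2 ≤ p.count x

/-- A pattern is balanced if it is doubled and every variable occurs both in
the prefix of length ⌊|p|/2⌋ and in the suffix of length ⌊|p|/2⌋. -/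
def BalancedPattern {V : Type*} [DecidableEq V] (p : List V) : Prop :=
  Doubled p ∧ ∀ x ∈ p, x ∈ p.take (p.length / 2) ∧ x ∈ p.drop (p.length - p.length / 2)

theorem balanced_factor_of_long_pattern {V : Type*} [DecidableEq V] (f k : ℕ) (hf : 2 ≤ f)
    (p : List V) (hp : p ≠ []) (hvars : p.toFinset.card ≤ k)
    (hlen : f * 2 ^ (k - 1) ≤ p.length) :
    ∃ p' : List V, p'.IsInfix p ∧ p' ≠ [] ∧
      ∃ k' : ℕ, 1 ≤ k' ∧ p'.toFinset.card = k' ∧ f * 2 ^ (k' - 1) ≤ p'.length ∧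
        BalancedPattern p' := by
  induction k generalizing p with
  | zero =>
    exfalso
    have h0 : p.toFinset = ∅ := Finset.card_eq_zero.mp (Nat.le_zero.mp hvars)
    exact hp (List.toFinset_eq_empty_iff p |>.mp h0)
  | succ k ih =>
    set n := p.length with hn
    have hn2 : 2 ≤ n := by
      have h1 : 2 ≤ f * 2 ^ (k + 1 - 1) :=
        le_trans hf (Nat.le_mul_of_pos_right f (Nat.pow_pos two_pos))
      omega
    by_cases hb : ∀ x ∈ p, x ∈ p.take (n / 2) ∧ x ∈ p.drop (n - n / 2)
    · -- p itself is balanced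
      have hdbl : Doubled p := by
        intro x hx
        obtain ⟨h1, h2⟩ := hb x hx
        have h2' : x ∈ p.drop (n / 2) := by
          have heq : p.drop (n - n / 2) = (p.drop (n / 2)).drop (n - n / 2 - n / 2) := by
            rw [List.drop_drop]; congr 1; omega
          rw [heq] at h2
          exact List.mem_of_mem_drop h2
        have hsplit : p.take (n / 2) ++ p.drop (n / 2) = p := List.take_append_drop _ _
        have hc1 : 0 < (p.take (n / 2)).count x := List.count_pos_iff.mpr h1
        have hc2 : 0 < (p.drop (n / 2)).count x := List.count_pos_iff.mpr h2'
        have : p.count x = (p.take (n / 2)).count x + (p.drop (n / 2)).count x := by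
          conv_lhs => rw [← hsplit]
          rw [List.count_append]
        omega
      have hpos : 0 < p.toFinset.card := by
        obtain ⟨a, ha⟩ := List.exists_mem_of_ne_nil p hp
        exact Finset.card_pos.mpr ⟨a, List.mem_toFinset.mpr ha⟩
      refine ⟨p, List.infix_refl p, hp, p.toFinset.card, hpos, rfl, ?_, hdbl, hb⟩
      calc f * 2 ^ (p.toFinset.card - 1) ≤ f * 2 ^ (k + 1 - 1) := by
            exact Nat.mul_le_mul_left f (Nat.pow_le_pow_right (by norm_num) (by omega))
        _ ≤ n := hlen
    · -- some variable misses a half: recurse on that half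
      push_neg at hb
      obtain ⟨x, hx, hcase⟩ := hb
      have hxp : x ∈ p.toFinset := List.mem_toFinset.mpr hx
      have key : ∀ h : List V, h.IsInfix p → h.length = n / 2 → x ∉ h →
          ∃ p' : List V, p'.IsInfix p ∧ p' ≠ [] ∧
            ∃ k' : ℕ, 1 ≤ k' ∧ p'.toFinset.card = k' ∧ f * 2 ^ (k' - 1) ≤ p'.length ∧
              BalancedPattern p' := by
        intro h hinf hhl hxh
        have hne : h ≠ [] := by
          intro he
          rw [he] at hhl
          simp at hhl
          omega
        have hsub : h.toFinset ⊆ p.toFinset.erase x := by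
          intro a ha
          rw [List.mem_toFinset] at ha
          exact Finset.mem_erase.mpr ⟨fun hax => hxh (hax ▸ ha),
            List.mem_toFinset.mpr (hinf.subset ha)⟩
        have hcard : h.toFinset.card ≤ k := by
          have := Finset.card_le_card hsub
          rw [Finset.card_erase_of_mem hxp] at this
          omega
        have hk1 : 1 ≤ k := by
          by_contra hk
          have hk0 : k = 0 := by omega
          rw [hk0] at hcard
          have : h.toFinset = ∅ := Finset.card_eq_zero.mp (Nat.le_zero.mp hcard)
          exact hne (List.toFinset_eq_empty_iff h |>.mp this)
        have hlen' : f * 2 ^ (k - 1) ≤ h.length := by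
          rw [hhl]
          rw [Nat.le_div_iff_mul_le two_pos]
          have heq : f * 2 ^ (k - 1) * 2 = f * 2 ^ k := by
            rw [mul_assoc, ← pow_succ]
            congr 2
            omega
          rw [heq]
          simpa using hlen
        obtain ⟨p', hi, rest⟩ := ih h hne hcard hlen'
        exact ⟨p', hi.trans hinf, rest⟩
      rcases (not_and_or.mp (fun hand => hcase hand.1 hand.2 : ¬(x ∈ p.take (n / 2) ∧ x ∈ p.drop (n - n / 2)))) with hnt | hnd
      · refine key (p.take (n / 2)) (List.take_prefix _ _).isInfix ?_ hnt
        rw [List.length_take]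
        omega
      · refine key (p.drop (n - n / 2)) (List.drop_suffix _ _).isInfix ?_ hnd
        rw [List.length_drop]
        omega
end

section
/- For every integer f ≥ 2, every pattern with at most k variables and length at least f·2^(k-1) contains, as a factor, a doubled pattern p' with some number k' ≥ 1 of variables and length at least f·2^(k'-1). -/
theorem doubled_factor_of_long_pattern {V : Type*} [DecidableEq V] (f k : ℕ) (hf : 2 ≤ f)
    (p : List V) (hp : p ≠ []) (hvars : p.toFinset.card ≤ k)
    (hlen : f * 2 ^ (k - 1) ≤ p.length) :
    ∃ p' : List V, p'.IsInfix p ∧ p' ≠ [] ∧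
      ∃ k' : ℕ, 1 ≤ k' ∧ p'.toFinset.card = k' ∧ f * 2 ^ (k' - 1) ≤ p'.length ∧
        Doubled p' := by
  induction k using Nat.strong_induction_on generalizing p with
  | _ k ih =>
  have hcardpos : 1 ≤ p.toFinset.card := by
    refine Finset.card_pos.mpr ?_
    obtain ⟨a, ha⟩ := List.exists_mem_of_ne_nil p hp
    exact ⟨a, List.mem_toFinset.mpr ha⟩
  by_cases hd : Doubled p
  · refine ⟨p, List.infix_refl p, hp, p.toFinset.card, hcardpos, rfl, ?_, hd⟩
    calc f * 2 ^ (p.toFinset.card - 1) ≤ f * 2 ^ (k - 1) := by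
          exact Nat.mul_le_mul_left _ (Nat.pow_le_pow_right (by norm_num) (by omega))
      _ ≤ p.length := hlen
  · simp only [Doubled, not_forall] at hd
    obtain ⟨x, hx, hcx⟩ := hd
    have h1 : p.count x = 1 := by
      have := List.count_pos_iff.mpr hx
      omega
    obtain ⟨u, v, huv⟩ := List.append_of_mem hx
    have hcnt : u.count x + v.count x + 1 = 1 := by
      rw [huv] at h1
      simp [List.count_append, List.count_cons] at h1
      omega
    have hxu : x ∉ u := by
      rw [← List.count_eq_zero]; omega
    have hxv : x ∉ v := by
      rw [← List.count_eq_zero]; omega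
    have hk2 : 2 ≤ k := by
      by_contra hk
      have hk1 : k = 1 := by omega
      have hcard1 : p.toFinset.card = 1 := by omega
      have hsing : p.toFinset = {x} := by
        obtain ⟨a, ha⟩ := Finset.card_eq_one.mp hcard1
        have hxa : x = a := by
          have := List.mem_toFinset.mpr hx
          rw [ha] at this
          simpa using this
        rw [ha, hxa]
      have hall : ∀ b ∈ p, b = x := by
        intro b hb
        have := List.mem_toFinset.mpr hb
        rw [hsing] at this
        simpa using this
      have : p.count x = p.length := List.count_eq_length.mpr fun b hb => (hall b hb).symm
      have hlen' : 2 ≤ p.length := by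
        have : 1 ≤ 2 ^ (k - 1) := Nat.one_le_two_pow
        nlinarith [hlen]
      omega
    have husub : u.toFinset ⊆ p.toFinset.erase x := by
      intro a ha
      have ha' := List.mem_toFinset.mp ha
      refine Finset.mem_erase.mpr ⟨?_, ?_⟩
      · rintro rfl; exact hxu ha'
      · exact List.mem_toFinset.mpr (by rw [huv]; simp [ha'])
    have hvsub : v.toFinset ⊆ p.toFinset.erase x := by
      intro a ha
      have ha' := List.mem_toFinset.mp ha
      refine Finset.mem_erase.mpr ⟨?_, ?_⟩
      · rintro rfl; exact hxv ha'
      · exact List.mem_toFinset.mpr (by rw [huv]; simp [ha'])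
    have herase : (p.toFinset.erase x).card ≤ k - 1 := by
      have := Finset.card_erase_of_mem (List.mem_toFinset.mpr hx)
      omega
    have hpow : 2 ^ (k - 1) = 2 * 2 ^ (k - 2) := by
      rw [← pow_succ']
      congr 1
      omega
    have hplen : p.length = u.length + v.length + 1 := by
      rw [huv]; simp; omega
    have hlong : f * 2 ^ (k - 2) ≤ u.length ∨ f * 2 ^ (k - 2) ≤ v.length := by
      rw [hpow] at hlen
      set m := f * 2 ^ (k - 2)
      have : f * (2 * 2 ^ (k - 2)) = 2 * m := by ring
      omega
    have hm2 : 2 ≤ f * 2 ^ (k - 2) := by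
      have : 1 ≤ 2 ^ (k - 2) := Nat.one_le_two_pow
      nlinarith
    rcases hlong with hw | hw
    · have hune : u ≠ [] := by
        intro h; rw [h] at hw; simp at hw; omega
      obtain ⟨p', hinf, hne, result⟩ := ih (k - 1) (by omega) u hune
        (le_trans (Finset.card_le_card husub) herase)
        (by
          have : k - 1 - 1 = k - 2 := by omega
          rw [this]; exact hw)
      exact ⟨p', hinf.trans ⟨[], x :: v, by rw [huv]; simp⟩, hne, result⟩
    · have hvne : v ≠ [] := by
        intro h; rw [h] at hw; simp at hw; omega
      obtain ⟨p', hinf, hne, result⟩ := ih (k - 1) (by omega) v hvne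
        (le_trans (Finset.card_le_card hvsub) herase)
        (by
          have : k - 1 - 1 = k - 2 := by omega
          rw [this]; exact hw)
      exact ⟨p', hinf.trans ⟨u ++ [x], [], by rw [huv]; simp⟩, hne, result⟩
end

section
/- The function ḡ_k(ℓ) = ( (⌊ℓ/2⌋)^(k−1) / (k−1)! )^(1/ℓ) satisfies: for all k ≥ 5 and all ℓ ≥ 3·2^(k−1), ḡ_k(ℓ) ≤ ḡ_k(3·2^(k−1)); moreover ḡ_k(3·2^(k−1)) ≤ ḡ_5(48) for all k ≥ 5, and ḡ_5(48) < 1.21973. -/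
open Real

/-- `ḡ_k(ℓ) = ((⌊ℓ/2⌋)^(k-1)/(k-1)!)^(1/ℓ)` for a real argument `ℓ`. -/
noncomputable def gbar (k : ℕ) (ℓ : ℝ) : ℝ :=
  (((⌊ℓ / 2⌋ : ℤ) : ℝ) ^ (k - 1) / (Nat.factorial (k - 1))) ^ ((1 : ℝ) / ℓ)

lemma gbar_exp (m : ℕ) (ℓ b : ℝ) (hℓ : 0 < ℓ) (hb : 0 < b)
    (hfloor : ((⌊ℓ / 2⌋ : ℤ) : ℝ) = b) :
    gbar (m + 1) ℓ =
      Real.exp (((m : ℝ) * Real.log b - Real.log (Nat.factorial m)) * (1 / ℓ)) := by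
  have hfac : (0 : ℝ) < (Nat.factorial m : ℝ) := by
    exact_mod_cast (Nat.factorial_pos m)
  have hbase : (0 : ℝ) < b ^ m / (Nat.factorial m : ℝ) := by positivity
  rw [gbar]
  simp only [Nat.add_sub_cancel, hfloor]
  rw [Real.rpow_def_of_pos hbase, Real.log_div (pow_pos hb m).ne' hfac.ne',
    Real.log_pow]

lemma one_le_log_three : (1 : ℝ) ≤ Real.log 3 :=
  (Real.le_log_iff_exp_le (by norm_num)).2
    (le_of_lt (lt_of_lt_of_le Real.exp_one_lt_d9 (by norm_num)))

lemma fact_le (n : ℕ) :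
    Nat.factorial (n + 4) ≤ (n + 5) * 3 ^ (n + 3) * 2 ^ ((n + 4) * (n + 1)) := by
  induction n with
  | zero => decide
  | succ n ih =>
    have h4 : n < 4 ^ n := Nat.lt_pow_self (by norm_num : 1 < 4)
    have key : (n + 5) * (n + 5) ≤ (n + 6) * (3 * (64 * 4 ^ n)) := by nlinarith
    have hpow : (2 : ℕ) ^ ((n + 5) * (n + 2)) = 2 ^ ((n + 4) * (n + 1)) * (64 * 4 ^ n) := by
      rw [show (n + 5) * (n + 2) = (n + 4) * (n + 1) + (2 * n + 6) by ring, pow_add]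
      congr 1
      rw [show 2 * n + 6 = 6 + 2 * n by ring, pow_add, pow_mul]
      norm_num
    have hfs : Nat.factorial (n + 1 + 4) = (n + 5) * Nat.factorial (n + 4) := by
      rw [show n + 1 + 4 = (n + 4) + 1 by ring, Nat.factorial_succ]
    rw [hfs]
    calc (n + 5) * Nat.factorial (n + 4)
        ≤ (n + 5) * ((n + 5) * 3 ^ (n + 3) * 2 ^ ((n + 4) * (n + 1))) :=
          Nat.mul_le_mul_left _ ih
      _ = (n + 5) * (n + 5) * (3 ^ (n + 3) * 2 ^ ((n + 4) * (n + 1))) := by ring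
      _ ≤ (n + 6) * (3 * (64 * 4 ^ n)) * (3 ^ (n + 3) * 2 ^ ((n + 4) * (n + 1))) :=
          Nat.mul_le_mul_right _ key
      _ = (n + 1 + 5) * 3 ^ (n + 1 + 3) * 2 ^ ((n + 1 + 4) * (n + 1 + 1)) := by
          rw [hpow]; ring

lemma part1 (i : ℕ) (ℓ : ℝ) (h : ((3 * 2 ^ (i + 4) : ℕ) : ℝ) ≤ ℓ) :
    gbar (i + 5) ℓ ≤ gbar (i + 5) ((3 * 2 ^ (i + 4) : ℕ) : ℝ) := by
  set Q : ℝ := ((3 * 2 ^ (i + 4) : ℕ) : ℝ) with hQdef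
  set B : ℝ := 3 * 2 ^ (i + 3) with hBdef
  have hBpos : (0 : ℝ) < B := by positivity
  have hQ2 : Q = 2 * B := by rw [hQdef, hBdef]; push_cast; ring
  have hQpos : (0 : ℝ) < Q := by rw [hQ2]; linarith
  have hℓpos : (0 : ℝ) < ℓ := lt_of_lt_of_le hQpos h
  set b : ℝ := ((⌊ℓ / 2⌋ : ℤ) : ℝ) with hbdef
  have hbB : B ≤ b := by
    have h1 : ((3 * 2 ^ (i + 3) : ℤ) : ℝ) ≤ ℓ / 2 := by
      push_cast
      rw [le_div_iff₀ (by norm_num : (0:ℝ) < 2)]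
      calc (3 : ℝ) * 2 ^ (i + 3) * 2 = 2 * B := by rw [hBdef]; ring
        _ = Q := hQ2.symm
        _ ≤ ℓ := h
    have h2 := Int.le_floor.2 h1
    calc B = ((3 * 2 ^ (i + 3) : ℤ) : ℝ) := by push_cast; ring
      _ ≤ b := Int.cast_le.mpr h2
  have hbpos : (0 : ℝ) < b := lt_of_lt_of_le hBpos hbB
  have hble : b ≤ ℓ / 2 := Int.floor_le _
  set M : ℝ := ((i + 4 : ℕ) : ℝ) with hMdef
  set C : ℝ := Real.log (Nat.factorial (i + 4)) with hCdef
  have hM : (4 : ℝ) ≤ M := by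
    rw [hMdef]
    exact_mod_cast Nat.le_add_left 4 i
  have hMpos : (0 : ℝ) < M := by linarith
  -- rewrite both sides as exponentials
  have hfloorQ : ((⌊Q / 2⌋ : ℤ) : ℝ) = B := by
    have : Q / 2 = ((3 * 2 ^ (i + 3) : ℤ) : ℝ) := by
      rw [hQdef]; push_cast; ring
    rw [this, Int.floor_intCast]; rw [hBdef]; push_cast; try ring
  have e1 : gbar (i + 5) ℓ = Real.exp ((M * Real.log b - C) * (1 / ℓ)) :=
    gbar_exp (i + 4) ℓ b hℓpos hbpos rfl
  have e2 : gbar (i + 5) Q = Real.exp ((M * Real.log B - C) * (1 / Q)) :=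
    gbar_exp (i + 4) Q B hQpos hBpos hfloorQ
  rw [e1, e2, Real.exp_le_exp, mul_one_div, mul_one_div,
    div_le_div_iff₀ hℓpos hQpos]
  -- key estimates
  have hC : C ≤ M * Real.log M := by
    have h1 : (Nat.factorial (i + 4) : ℝ) ≤ ((i + 4 : ℕ) : ℝ) ^ (i + 4 : ℕ) := by
      exact_mod_cast Nat.factorial_le_pow (i + 4)
    calc C ≤ Real.log (((i + 4 : ℕ) : ℝ) ^ (i + 4 : ℕ)) :=
          Real.log_le_log (by exact_mod_cast Nat.factorial_pos (i + 4)) h1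
      _ = M * Real.log M := by rw [Real.log_pow, hMdef]
  have hBM : 3 * M ≤ B := by
    have h1 : (i + 4 : ℕ) ≤ 2 ^ (i + 3) := Nat.lt_two_pow_self
    have h1' : M ≤ (2 : ℝ) ^ (i + 3) := by
      rw [hMdef]
      exact_mod_cast h1
    rw [hBdef]; nlinarith
  have hlogB : 1 + Real.log M ≤ Real.log B := by
    have h1 : Real.log (3 * M) ≤ Real.log B :=
      Real.log_le_log (by positivity) hBM
    rw [Real.log_mul (by norm_num) hMpos.ne'] at h1
    linarith [one_le_log_three]
  have key : C + M ≤ M * Real.log B := by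
    nlinarith [mul_le_mul_of_nonneg_left hlogB (le_of_lt hMpos)]
  set t : ℝ := ℓ / Q with htdef
  have ht1 : 1 ≤ t := (one_le_div hQpos).2 h
  have hℓQ : ℓ = Q * t := by rw [htdef]; field_simp
  have hlogt : Real.log t ≤ t - 1 := Real.log_le_sub_one_of_pos (by linarith)
  have hlogb : Real.log b ≤ Real.log B + Real.log t := by
    have hbt : ℓ / 2 = B * t := by rw [hℓQ, hQ2]; ring
    have h1 : Real.log b ≤ Real.log (B * t) := by
      rw [← hbt]; exact Real.log_le_log hbpos hble
    rw [Real.log_mul hBpos.ne' (by linarith : t ≠ 0)] at h1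
    exact h1
  have core : M * Real.log b - C ≤ t * (M * Real.log B - C) := by
    have h1 : M * Real.log b ≤ M * (Real.log B + Real.log t) :=
      mul_le_mul_of_nonneg_left hlogb (le_of_lt hMpos)
    have h2 : M * Real.log t ≤ M * (t - 1) :=
      mul_le_mul_of_nonneg_left hlogt (le_of_lt hMpos)
    have h3 : M * (t - 1) ≤ (M * Real.log B - C) * (t - 1) :=
      mul_le_mul_of_nonneg_right (by linarith) (by linarith)
    nlinarith
  rw [hℓQ]
  nlinarith [mul_le_mul_of_nonneg_left core (le_of_lt hQpos)]

lemma part2_step (n : ℕ) :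
    gbar (n + 6) ((3 * 2 ^ (n + 5) : ℕ) : ℝ) ≤ gbar (n + 5) ((3 * 2 ^ (n + 4) : ℕ) : ℝ) := by
  set b1 : ℝ := 3 * 2 ^ (n + 3) with hb1def
  have hb1pos : (0 : ℝ) < b1 := by positivity
  have hL1 : ((3 * 2 ^ (n + 4) : ℕ) : ℝ) = 2 * b1 := by rw [hb1def]; push_cast; ring
  have hL2 : ((3 * 2 ^ (n + 5) : ℕ) : ℝ) = 4 * b1 := by rw [hb1def]; push_cast; ring
  have hfloor1 : ((⌊(2 * b1) / 2⌋ : ℤ) : ℝ) = b1 := by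
    have : (2 * b1) / 2 = ((3 * 2 ^ (n + 3) : ℤ) : ℝ) := by rw [hb1def]; push_cast; ring
    rw [this, Int.floor_intCast]; rw [hb1def]; push_cast; try ring
  have hfloor2 : ((⌊(4 * b1) / 2⌋ : ℤ) : ℝ) = 2 * b1 := by
    have : (4 * b1) / 2 = ((2 * (3 * 2 ^ (n + 3)) : ℤ) : ℝ) := by rw [hb1def]; push_cast; ring
    rw [this, Int.floor_intCast]; rw [hb1def]; push_cast; try ring
  set C : ℝ := Real.log (Nat.factorial (n + 4)) with hCdef
  have e1 : gbar (n + 5) ((3 * 2 ^ (n + 4) : ℕ) : ℝ) =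
      Real.exp ((((n + 4 : ℕ) : ℝ) * Real.log b1 - C) * (1 / (2 * b1))) := by
    rw [hL1]
    exact gbar_exp (n + 4) (2 * b1) b1 (by linarith) hb1pos hfloor1
  have e2 : gbar (n + 6) ((3 * 2 ^ (n + 5) : ℕ) : ℝ) =
      Real.exp ((((n + 5 : ℕ) : ℝ) * Real.log (2 * b1) -
        Real.log (Nat.factorial (n + 5))) * (1 / (4 * b1))) := by
    rw [hL2]
    exact gbar_exp (n + 5) (4 * b1) (2 * b1) (by linarith) (by linarith) hfloor2
  rw [e1, e2, Real.exp_le_exp, mul_one_div, mul_one_div,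
    div_le_div_iff₀ (by linarith : (0:ℝ) < 4 * b1) (by linarith : (0:ℝ) < 2 * b1)]
  -- facts
  have hCs : Real.log (Nat.factorial (n + 5)) = Real.log ((n : ℝ) + 5) + C := by
    rw [hCdef, show n + 5 = (n + 4) + 1 by ring, Nat.factorial_succ]
    push_cast
    rw [Real.log_mul (by positivity) (by exact_mod_cast (Nat.factorial_pos (n+4)).ne')]
    try norm_num
    try ring_nf
  have hlog2b1 : Real.log (2 * b1) = Real.log 2 + Real.log b1 :=
    Real.log_mul (by norm_num) hb1pos.ne'
  have hlogb1 : Real.log b1 = Real.log 3 + ((n : ℝ) + 3) * Real.log 2 := by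
    rw [hb1def, Real.log_mul (by norm_num) (by positivity), Real.log_pow]
    push_cast; ring
  have hlogfact : C ≤ Real.log ((n : ℝ) + 5) + ((n : ℝ) + 3) * Real.log 3 +
      (((n : ℝ) + 4) * ((n : ℝ) + 1)) * Real.log 2 := by
    have h := fact_le n
    have h' : (Nat.factorial (n + 4) : ℝ) ≤
        ((n + 5 : ℕ) : ℝ) * 3 ^ (n + 3) * 2 ^ ((n + 4) * (n + 1)) := by
      exact_mod_cast h
    have h2 : C ≤ Real.log (((n + 5 : ℕ) : ℝ) * 3 ^ (n + 3) * 2 ^ ((n + 4) * (n + 1))) :=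
      Real.log_le_log (by exact_mod_cast Nat.factorial_pos (n + 4)) h'
    rw [Real.log_mul (by positivity) (by positivity),
      Real.log_mul (by positivity) (by positivity), Real.log_pow, Real.log_pow] at h2
    push_cast at h2 ⊢
    linarith
  have core : ((n + 5 : ℕ) : ℝ) * Real.log (2 * b1) - Real.log (Nat.factorial (n + 5)) ≤
      2 * (((n + 4 : ℕ) : ℝ) * Real.log b1 - C) := by
    rw [hCs, hlog2b1]
    have hid : ((n : ℝ) + 3) * Real.log b1 =
        ((n : ℝ) + 3) * Real.log 3 + (((n : ℝ) + 4) * ((n : ℝ) + 1)) * Real.log 2 +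
          ((n : ℝ) + 5) * Real.log 2 := by
      rw [hlogb1]; ring
    push_cast
    nlinarith [hlogfact, hid]
  nlinarith [mul_le_mul_of_nonneg_left core (by linarith : (0:ℝ) ≤ 2 * b1)]

lemma part2 (j : ℕ) : gbar (j + 5) ((3 * 2 ^ (j + 4) : ℕ) : ℝ) ≤ gbar 5 ((3 * 2 ^ 4 : ℕ) : ℝ) := by
  induction j with
  | zero => exact le_refl _
  | succ j ih => exact le_trans (part2_step j) ih

lemma part3 : gbar 5 48 < 1.21973 := by
  have hfl : ((⌊(48 : ℝ) / 2⌋ : ℤ) : ℝ) = 24 := by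
    norm_num
  have e : gbar 5 48 = (13824 : ℝ) ^ ((1 : ℝ) / 48) := by
    have hx := gbar_exp 4 48 24 (by norm_num) (by norm_num) hfl
    rw [show (4 : ℕ) + 1 = 5 by rfl] at hx
    rw [hx, Real.rpow_def_of_pos (by norm_num : (0:ℝ) < 13824)]
    congr 1
    have h24 : Real.log ((Nat.factorial 4 : ℕ) : ℝ) = Real.log 24 := by
      norm_num [Nat.factorial]
    rw [h24, show (13824 : ℝ) = 24 ^ (3 : ℕ) by norm_num, Real.log_pow]
    push_cast
    ring
  rw [e]
  have h : (13824 : ℝ) < 1.21973 ^ (48 : ℕ) := by norm_num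
  calc (13824 : ℝ) ^ ((1 : ℝ) / 48)
      < ((1.21973 : ℝ) ^ (48 : ℕ)) ^ ((1 : ℝ) / 48) :=
        Real.rpow_lt_rpow (by norm_num) h (by norm_num)
    _ = 1.21973 := by
        rw [← Real.rpow_natCast 1.21973 48, ← Real.rpow_mul (by norm_num)]
        norm_num

theorem gbar_bounds :
    (∀ k : ℕ, 5 ≤ k → ∀ ℓ : ℝ, (3 * 2 ^ (k - 1) : ℕ) ≤ ℓ →
      gbar k ℓ ≤ gbar k (3 * 2 ^ (k - 1) : ℕ)) ∧
    (∀ k : ℕ, 5 ≤ k → gbar k (3 * 2 ^ (k - 1) : ℕ) ≤ gbar 5 48) ∧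
    gbar 5 48 < 1.21973 := by
  refine ⟨?_, ?_, part3⟩
  · intro k hk ℓ hℓ
    obtain ⟨i, rfl⟩ : ∃ i, k = i + 5 := ⟨k - 5, by omega⟩
    exact part1 i ℓ hℓ
  · intro k hk
    obtain ⟨j, rfl⟩ : ∃ j, k = j + 5 := ⟨k - 5, by omega⟩
    have h := part2 j
    have h48 : ((3 * 2 ^ 4 : ℕ) : ℝ) = 48 := by norm_num
    rw [h48] at h
    exact h
end
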